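/- Let N ≥ 1, let p be a real polynomial of degree at most 2N, and let a ≠ 0. Then the Lagrange-interpolation second-derivative formula is exact: p''(0) = −(1/a²)·( 2·p(0)·∑_{l=1}^{N} 1/l² − ∑_{k=1}^{N} ((p(ka) + p(−ka))/k²)·∏_{l=1, l≠k}^{N} l²/(l² − k²) ). -/

import Mathlib

open Polynomial Finset

private lemma inj_sq (N : ℕ) : Set.InjOn (fun k : ℕ => (k:ℝ)^2) ↑(Finset.Icc 1 N) := by
  intro k hk l hl h
  simp only at h
  have h' : ((k:ℝ) - l) * ((k:ℝ) + l) = 0 := by nlinarith [h]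
  rcases mul_eq_zero.mp h' with h'' | h''
  · exact_mod_cast (by linarith : (k:ℝ) = l)
  · simp only [Finset.coe_Icc, Set.mem_Icc] at hk hl
    have h1 : (1:ℝ) ≤ (k:ℝ) := by exact_mod_cast hk.1
    have h2 : (1:ℝ) ≤ (l:ℝ) := by exact_mod_cast hl.1
    linarith

private lemma keyL (N : ℕ) (q : Polynomial ℝ) (hq : q.degree < (N : WithBot ℕ)) :
    q.eval 0 = ∑ k ∈ Finset.Icc 1 N, q.eval ((k:ℝ)^2) *
      ∏ l ∈ (Finset.Icc 1 N).erase k, (l:ℝ)^2 / ((l:ℝ)^2 - (k:ℝ)^2) := by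
  have hvs := inj_sq N
  have hcard : #(Finset.Icc 1 N) = N := by simp
  have hdeg : q.degree < (#(Finset.Icc 1 N) : WithBot ℕ) := by rw [hcard]; exact hq
  have hq' := Lagrange.eq_interpolate hvs hdeg
  conv_lhs => rw [hq']
  rw [Lagrange.interpolate_apply, eval_finset_sum]
  refine Finset.sum_congr rfl fun k hk => ?_
  rw [eval_mul, eval_C]
  congr 1
  unfold Lagrange.basis
  rw [eval_prod]
  refine Finset.prod_congr rfl fun l hl => ?_
  have hlk : l ≠ k := (Finset.mem_erase.mp hl).1
  have hl' : l ∈ Finset.Icc 1 N := (Finset.mem_erase.mp hl).2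
  have hne : (l:ℝ)^2 - (k:ℝ)^2 ≠ 0 := by
    intro h
    exact hlk (hvs (Finset.mem_coe.mpr hl') (Finset.mem_coe.mpr hk) (by dsimp; linarith))
  rw [Lagrange.basisDivisor]
  simp only [eval_mul, eval_C, eval_sub, eval_X]
  have hne' : (k:ℝ)^2 - (l:ℝ)^2 ≠ 0 := by intro h; apply hne; linarith
  field_simp
  ring

open Polynomial Finset

section helpers
variable (N : ℕ) (p : Polynomial ℝ) (a : ℝ)

noncomputable def Faux : Polynomial ℝ :=
  ∑ m ∈ Finset.range (N+1), Polynomial.C (p.coeff (2*m) * a^(2*m)) * Polynomial.X ^ m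

lemma Faux_eval (hp : p.natDegree ≤ 2 * N) (x : ℝ) :
    p.eval (x * a) + p.eval (-(x * a)) = 2 * (Faux N p a).eval (x^2) := by
  have h1 : p.eval (x*a) = ∑ n ∈ Finset.range (2*N+1), p.coeff n * (x*a)^n :=
    Polynomial.eval_eq_sum_range' (lt_of_le_of_lt hp (Nat.lt_succ_self _)) _
  have h2 : p.eval (-(x*a)) = ∑ n ∈ Finset.range (2*N+1), p.coeff n * (-(x*a))^n :=
    Polynomial.eval_eq_sum_range' (lt_of_le_of_lt hp (Nat.lt_succ_self _)) _
  have himg : (Finset.range (N+1)).image (fun m => 2*m) ⊆ Finset.range (2*N+1) := by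
    intro n hn
    simp only [Finset.mem_image, Finset.mem_range] at hn ⊢
    obtain ⟨m, hm, rfl⟩ := hn
    omega
  have hzero : ∀ n ∈ Finset.range (2*N+1), n ∉ (Finset.range (N+1)).image (fun m => 2*m) →
      p.coeff n * ((x*a)^n + (-(x*a))^n) = 0 := by
    intro n hn hn'
    rcases Nat.even_or_odd n with ⟨m, hm⟩ | hodd
    · exfalso
      apply hn'
      simp only [Finset.mem_image, Finset.mem_range] at hn ⊢
      exact ⟨m, by omega, by omega⟩
    · rw [hodd.neg_pow]; ring
  have hsum : ∑ n ∈ Finset.range (2*N+1), p.coeff n * ((x*a)^n + (-(x*a))^n)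
      = ∑ m ∈ Finset.range (N+1), p.coeff (2*m) * ((x*a)^(2*m) + (-(x*a))^(2*m)) := by
    rw [← Finset.sum_subset himg hzero, Finset.sum_image]
    intro i _ j _ h
    simp only at h
    omega
  have heval : (Faux N p a).eval (x^2)
      = ∑ m ∈ Finset.range (N+1), p.coeff (2*m) * a^(2*m) * (x^2)^m := by
    simp [Faux, eval_finset_sum]
  rw [h1, h2, ← Finset.sum_add_distrib]
  have : ∀ n, p.coeff n * (x*a)^n + p.coeff n * (-(x*a))^n
      = p.coeff n * ((x*a)^n + (-(x*a))^n) := fun n => by ring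
  simp_rw [this]
  rw [hsum, heval, Finset.mul_sum]
  refine Finset.sum_congr rfl fun m _ => ?_
  have heven : (-(x*a))^(2*m) = (x*a)^(2*m) := (even_two_mul m).neg_pow _
  rw [heven, mul_pow]
  ring

lemma Faux_eval_zero (hp : p.natDegree ≤ 2 * N) : (Faux N p a).eval 0 = p.eval 0 := by
  have := Faux_eval N p a hp 0
  simp at this
  linarith

lemma Faux_coeff_one (hN : 1 ≤ N) : (Faux N p a).coeff 1 = p.coeff 2 * a^2 := by
  rw [Faux, Polynomial.finset_sum_coeff]
  simp only [Polynomial.coeff_C_mul, Polynomial.coeff_X_pow]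
  rw [Finset.sum_eq_single 1]
  · norm_num
  · intro b _ hb; simp [Ne.symm hb]
  · intro h; exact absurd (Finset.mem_range.mpr (by omega)) h

lemma Faux_natDegree : (Faux N p a).natDegree ≤ N := by
  apply Polynomial.natDegree_sum_le_of_forall_le
  intro m hm
  exact le_trans (Polynomial.natDegree_C_mul_le _ _)
    (le_trans (Polynomial.natDegree_X_pow_le m) (by simpa using Nat.lt_succ_iff.mp (Finset.mem_range.mp hm)))

noncomputable def Waux : Polynomial ℝ :=
  ∏ l ∈ Finset.Icc 1 N, (1 - Polynomial.C (((l:ℝ)^2)⁻¹) * Polynomial.X)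

lemma Waux_eval_zero : (Waux N).eval 0 = 1 := by
  rw [Waux, eval_prod]
  exact Finset.prod_eq_one fun l _ => by simp

lemma Waux_eval_node {k : ℕ} (hk : k ∈ Finset.Icc 1 N) : (Waux N).eval ((k:ℝ)^2) = 0 := by
  rw [Waux, eval_prod]
  apply Finset.prod_eq_zero hk
  have hk1 : 1 ≤ k := (Finset.mem_Icc.mp hk).1
  have hkne : ((k:ℝ))^2 ≠ 0 := by positivity
  simp [inv_mul_cancel₀ hkne]

lemma deriv_prod_eval_zero (s : Finset ℕ) (c : ℕ → ℝ) :
    (Polynomial.derivative (∏ l ∈ s, (1 - Polynomial.C (c l) * Polynomial.X))).eval 0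
      = -∑ l ∈ s, c l := by
  classical
  induction s using Finset.induction_on with
  | empty => simp
  | @insert b s hb ih =>
    rw [Finset.prod_insert hb, Polynomial.derivative_mul, eval_add, eval_mul, eval_mul, ih,
      Finset.sum_insert hb]
    have h1 : Polynomial.eval 0 (Polynomial.derivative
        (1 - Polynomial.C (c b) * Polynomial.X)) = -(c b) := by simp
    have h2 : Polynomial.eval 0 (∏ l ∈ s, (1 - Polynomial.C (c l) * Polynomial.X)) = 1 := by
      rw [eval_prod]; exact Finset.prod_eq_one fun l _ => by simp
    have h3 : Polynomial.eval 0 (1 - Polynomial.C (c b) * Polynomial.X) = 1 := by simp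
    rw [h1, h2, h3]
    ring

lemma Waux_coeff_one : (Waux N).coeff 1 = -∑ l ∈ Finset.Icc 1 N, 1/(l:ℝ)^2 := by
  have h1 : (Waux N).coeff 1 = ((Polynomial.derivative (Waux N)).eval 0) := by
    rw [← Polynomial.coeff_zero_eq_eval_zero, Polynomial.coeff_derivative]
    norm_num
  rw [h1, Waux, deriv_prod_eval_zero]
  simp [one_div]

lemma Waux_natDegree : (Waux N).natDegree ≤ N := by
  refine le_trans (Polynomial.natDegree_prod_le _ _) ?_
  have : ∀ l ∈ Finset.Icc 1 N,
      (1 - Polynomial.C (((l:ℝ)^2)⁻¹) * Polynomial.X).natDegree ≤ 1 := by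
    intro l _
    refine le_trans (Polynomial.natDegree_sub_le _ _) ?_
    simp only [Polynomial.natDegree_one, max_le_iff]
    constructor
    · omega
    · exact le_trans (Polynomial.natDegree_C_mul_le _ _) Polynomial.natDegree_X_le
  refine le_trans (Finset.sum_le_sum this) ?_
  simp
end helpers

/-- for a real polynomial `p` of degree at most `2N` (`N ≥ 1`) and
`a ≠ 0`, the Lagrange-interpolation second-derivative formula is exact:
`p''(0) = −(1/a²)·(2 p(0) ∑_{l=1}^N 1/l² − ∑_{k=1}^N ((p(ka)+p(−ka))/k²) ∏_{l≠k} l²/(l²−k²))`. -/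
theorem stmt_5 (N : ℕ) (hN : 1 ≤ N) (p : Polynomial ℝ)
    (hp : p.natDegree ≤ 2 * N) (a : ℝ) (ha : a ≠ 0) :
    (Polynomial.derivative (Polynomial.derivative p)).eval 0 =
      -(1 / a ^ 2) *
        (2 * p.eval 0 * ∑ l ∈ Finset.Icc 1 N, (1 : ℝ) / (l : ℝ) ^ 2
          - ∑ k ∈ Finset.Icc 1 N,
              ((p.eval ((k : ℝ) * a) + p.eval (-((k : ℝ) * a))) / (k : ℝ) ^ 2) *
                ∏ l ∈ (Finset.Icc 1 N).erase k,
                  (l : ℝ) ^ 2 / ((l : ℝ) ^ 2 - (k : ℝ) ^ 2)) := by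
  classical
  set F : Polynomial ℝ := Faux N p a with hFdef
  set W : Polynomial ℝ := Waux N with hWdef
  set q : Polynomial ℝ := F - Polynomial.C (p.eval 0) * W with hqdef
  -- q vanishes at 0
  have hq0 : q.coeff 0 = 0 := by
    rw [Polynomial.coeff_zero_eq_eval_zero]
    simp only [hqdef, Polynomial.eval_sub, Polynomial.eval_mul, Polynomial.eval_C]
    rw [Faux_eval_zero N p a hp, Waux_eval_zero]
    ring
  obtain ⟨G, hG⟩ : Polynomial.X ∣ q := Polynomial.X_dvd_iff.mpr hq0
  -- degree bound for q
  have hqdeg : q.natDegree ≤ N := by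
    refine le_trans (Polynomial.natDegree_sub_le _ _) ?_
    rw [max_le_iff]
    exact ⟨Faux_natDegree N p a,
      le_trans (Polynomial.natDegree_C_mul_le _ _) (Waux_natDegree N)⟩
  -- degree bound for G
  have hGdeg : G.degree < (N : WithBot ℕ) := by
    by_cases hG0 : G = 0
    · rw [hG0, Polynomial.degree_zero]
      exact WithBot.bot_lt_coe N
    · rw [← Polynomial.natDegree_lt_iff_degree_lt hG0]
      have h1 : q.natDegree = 1 + G.natDegree := by
        rw [hG, Polynomial.natDegree_mul Polynomial.X_ne_zero hG0, Polynomial.natDegree_X]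
      have := hqdeg
      rw [h1] at this
      omega
  -- value of G at 0
  have hGzero : G.eval 0 = p.coeff 2 * a^2 + p.eval 0 * ∑ l ∈ Finset.Icc 1 N, 1/(l:ℝ)^2 := by
    have h1 : G.eval 0 = G.coeff 0 := (Polynomial.coeff_zero_eq_eval_zero G).symm
    have h2 : q.coeff 1 = G.coeff 0 := by
      rw [hG]
      exact Polynomial.coeff_X_mul G 0
    rw [h1, ← h2, hqdef]
    rw [Polynomial.coeff_sub, Polynomial.coeff_C_mul]
    rw [Faux_coeff_one N p a hN, Waux_coeff_one N]
    ring
  -- values of G at nodes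
  have hGval : ∀ k ∈ Finset.Icc 1 N, G.eval ((k:ℝ)^2)
      = (p.eval ((k:ℝ) * a) + p.eval (-((k:ℝ) * a))) / (2 * (k:ℝ)^2) := by
    intro k hk
    have hk1 : 1 ≤ k := (Finset.mem_Icc.mp hk).1
    have hkne : ((k:ℝ))^2 ≠ 0 := by positivity
    have hq_eval : q.eval ((k:ℝ)^2) = F.eval ((k:ℝ)^2) := by
      simp only [hqdef, Polynomial.eval_sub, Polynomial.eval_mul, Polynomial.eval_C]
      rw [hWdef, Waux_eval_node N hk]
      ring
    have hXG : q.eval ((k:ℝ)^2) = (k:ℝ)^2 * G.eval ((k:ℝ)^2) := by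
      rw [hG, Polynomial.eval_mul, Polynomial.eval_X]
    have hFk : 2 * F.eval ((k:ℝ)^2) = p.eval ((k:ℝ) * a) + p.eval (-((k:ℝ) * a)) := by
      rw [hFdef, ← Faux_eval N p a hp (k:ℝ)]
    field_simp
    rw [← hFk, ← hq_eval, hXG]
    ring
  -- Lagrange interpolation identity for G
  have hmain := keyL N G hGdeg
  -- per-term rewriting
  have hterm : ∀ k ∈ Finset.Icc 1 N,
      ((p.eval ((k : ℝ) * a) + p.eval (-((k : ℝ) * a))) / (k : ℝ) ^ 2) *
        ∏ l ∈ (Finset.Icc 1 N).erase k, (l:ℝ)^2 / ((l:ℝ)^2 - (k:ℝ)^2)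
      = 2 * (G.eval ((k:ℝ)^2) *
        ∏ l ∈ (Finset.Icc 1 N).erase k, (l:ℝ)^2 / ((l:ℝ)^2 - (k:ℝ)^2)) := by
    intro k hk
    have hk1 : 1 ≤ k := (Finset.mem_Icc.mp hk).1
    have hk0 : ((k:ℝ))^2 ≠ 0 := by positivity
    rw [hGval k hk]
    have h2 : (p.eval ((k : ℝ) * a) + p.eval (-((k : ℝ) * a))) / (k : ℝ) ^ 2
        = 2 * ((p.eval ((k : ℝ) * a) + p.eval (-((k : ℝ) * a))) / (2 * (k:ℝ)^2)) := by
      field_simp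
    rw [h2]
    ring
  -- rewrite the sum in the goal
  have hsum : ∑ k ∈ Finset.Icc 1 N,
      ((p.eval ((k : ℝ) * a) + p.eval (-((k : ℝ) * a))) / (k : ℝ) ^ 2) *
        ∏ l ∈ (Finset.Icc 1 N).erase k, (l:ℝ)^2 / ((l:ℝ)^2 - (k:ℝ)^2)
      = 2 * (p.coeff 2 * a^2 + p.eval 0 * ∑ l ∈ Finset.Icc 1 N, 1/(l:ℝ)^2) := by
    rw [Finset.sum_congr rfl hterm, ← Finset.mul_sum, ← hmain, hGzero]
  -- LHS is 2 * p.coeff 2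
  have hLHS : (Polynomial.derivative (Polynomial.derivative p)).eval 0 = 2 * p.coeff 2 := by
    rw [← Polynomial.coeff_zero_eq_eval_zero, Polynomial.coeff_derivative,
      Polynomial.coeff_derivative]
    push_cast
    ring
  rw [hLHS, hsum]
  have ha2 : a^2 ≠ 0 := pow_ne_zero 2 ha
  field_simp
  ring
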